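/- Given a reachability game G and its associated defender-choice LTS L(G): the relation {(s,s) : s a state of L(G)} ∪ {(s, s') : s ∈ V \ WinE} ∪ {(⟨s,X⟩, ⟨s,s̄⟩) : s ∈ V_∀ \ WinE, s̄ ∈ V \ WinE, s → s̄, X = succ(s)} is a bisimulation on L(G); hence if s ∉ WinE then s ∼ s'. -/

import Mathlib

/-- A reachability game: states `V`, Eve's states, transition relation, target set. -/
structure RGame (V : Type) where
  eve : Set V
  trans : V → V → Prop
  target : Set V

open Classical in
/-- The transfinite attractor stages: `W 0 = target`; for `o > 0`, a state not in
`W_{<o}` is added if it is Eve's with a transition into `W_{<o}`, or Adam's with a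
nonempty successor set contained in `W_{<o}`. -/
noncomputable def RGame.W {V : Type} (g : RGame V) (o : Ordinal.{0}) : Set V :=
  if o = 0 then g.target
  else
    let Wlt : Set V := ⋃ o' : {x : Ordinal.{0} // x < o}, g.W o'.1
    {s | s ∉ Wlt ∧
      ((s ∈ g.eve ∧ ∃ t, g.trans s t ∧ t ∈ Wlt) ∨
       (s ∉ g.eve ∧ (∃ t, g.trans s t) ∧ ∀ t, g.trans s t → t ∈ Wlt))}
termination_by o
decreasing_by exact o'.2

/-- Eve's winning region: the union of all attractor stages. -/
noncomputable def RGame.WinE {V : Type} (g : RGame V) : Set V := ⋃ o : Ordinal.{0}, g.W o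
/-- A labelled transition system with states `S` and actions `A`. -/
structure LTS (S : Type) (A : Type) where
  tr : A → S → S → Prop

/-- `R` is a simulation: every transition from `s` is matched from `s'`. -/
def LTS.IsSimulation {S A : Type} (L : LTS S A) (R : S → S → Prop) : Prop :=
  ∀ s s', R s s' → ∀ a t, L.tr a s t → ∃ t', L.tr a s' t' ∧ R t t'

/-- `R` is a bisimulation: mutual transfer conditions. -/
def LTS.IsBisimulation {S A : Type} (L : LTS S A) (R : S → S → Prop) : Prop :=
  ∀ s s', R s s' →
    (∀ a t, L.tr a s t → ∃ t', L.tr a s' t' ∧ R t t') ∧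
    (∀ a t', L.tr a s' t' → ∃ t, L.tr a s t ∧ R t t')

/-- Simulation preorder: the union of all simulations. -/
def LTS.Sim {S A : Type} (L : LTS S A) (s s' : S) : Prop :=
  ∃ R, L.IsSimulation R ∧ R s s'

/-- Bisimilarity: the union of all bisimulations. -/
def LTS.Bisim {S A : Type} (L : LTS S A) (s s' : S) : Prop :=
  ∃ R, L.IsBisimulation R ∧ R s s'
/-- States of the defender-choice LTS `L(G)`: original states, primed copies,
and the auxiliary states `⟨s,X⟩` (X = successor set of s) and `⟨s,t⟩`. -/
inductive DState (V : Type) where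
  | base (s : V) : DState V
  | prime (s : V) : DState V
  | all (s : V) : DState V
  | pick (s t : V) : DState V

/-- Actions of `L(G)`: one action per game transition, the choice action, and `a_win`. -/
inductive DAct (V : Type) where
  | move (s t : V) : DAct V
  | choice : DAct V
  | win : DAct V

/-- Labelled transitions of the defender-choice LTS `L(G)`. -/
inductive DTrans {V : Type} (g : RGame V) : DAct V → DState V → DState V → Prop
  | eveBase {s t} (hs : s ∈ g.eve) (h : g.trans s t) :
      DTrans g (DAct.move s t) (DState.base s) (DState.base t)
  | evePrime {s t} (hs : s ∈ g.eve) (h : g.trans s t) :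
      DTrans g (DAct.move s t) (DState.prime s) (DState.prime t)
  | choiceAll {s} (hs : s ∉ g.eve) (h : ∃ t, g.trans s t) :
      DTrans g DAct.choice (DState.base s) (DState.all s)
  | choicePickB {s t} (hs : s ∉ g.eve) (h : g.trans s t) :
      DTrans g DAct.choice (DState.base s) (DState.pick s t)
  | choicePickP {s t} (hs : s ∉ g.eve) (h : g.trans s t) :
      DTrans g DAct.choice (DState.prime s) (DState.pick s t)
  | allMove {s t} (hs : s ∉ g.eve) (h : g.trans s t) :
      DTrans g (DAct.move s t) (DState.all s) (DState.base t)
  | pickSame {s t} (hs : s ∉ g.eve) (h : g.trans s t) :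
      DTrans g (DAct.move s t) (DState.pick s t) (DState.prime t)
  | pickOther {s t u} (hs : s ∉ g.eve) (ht : g.trans s t) (hu : g.trans s u) (hne : u ≠ t) :
      DTrans g (DAct.move s u) (DState.pick s t) (DState.base u)
  | winLoop {s} (h : s ∈ g.target) :
      DTrans g DAct.win (DState.base s) (DState.base s)

/-- The defender-choice LTS associated with a reachability game. -/
def DLTS {V : Type} (g : RGame V) : LTS (DState V) (DAct V) := ⟨fun a p q => DTrans g a p q⟩


lemma winE_of_W {V : Type} {g : RGame V} {s : V} {o : Ordinal.{0}} (h : s ∈ g.W o) :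
    s ∈ g.WinE := Set.mem_iUnion.2 ⟨o, h⟩

lemma target_winE {V : Type} {g : RGame V} {s : V} (h : s ∈ g.target) : s ∈ g.WinE := by
  apply winE_of_W (o := 0)
  rw [RGame.W]; simpa using h

lemma eve_step {V : Type} {g : RGame V} {s t : V} (hs : s ∈ g.eve) (ht : g.trans s t)
    (h : t ∈ g.WinE) : s ∈ g.WinE := by
  obtain ⟨o, ho⟩ := Set.mem_iUnion.1 h
  set o' := Order.succ o with ho'
  have h0 : o' ≠ 0 := ((zero_le (a := o)).trans_lt (Order.lt_succ o)).ne'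
  have htW : t ∈ ⋃ o'' : {x : Ordinal.{0} // x < o'}, g.W o''.1 :=
    Set.mem_iUnion.2 ⟨⟨o, Order.lt_succ o⟩, ho⟩
  by_cases hsW : s ∈ ⋃ o'' : {x : Ordinal.{0} // x < o'}, g.W o''.1
  · obtain ⟨⟨o'', _⟩, h''⟩ := Set.mem_iUnion.1 hsW
    exact winE_of_W h''
  · apply winE_of_W (o := o')
    rw [RGame.W, if_neg h0]
    exact ⟨hsW, Or.inl ⟨hs, t, ht, htW⟩⟩

lemma adam_step {V : Type} {g : RGame V} {s : V} (hs : s ∉ g.eve) (hex : ∃ t, g.trans s t)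
    (hall : ∀ t, g.trans s t → t ∈ g.WinE) : s ∈ g.WinE := by
  have hch : ∀ t : {t // g.trans s t}, ∃ o : Ordinal.{0}, (t : V) ∈ g.W o :=
    fun t => Set.mem_iUnion.1 (hall t t.2)
  choose f hf using hch
  set o' := Order.succ (⨆ t, f t) with ho'
  have h0 : o' ≠ 0 := ((zero_le (a := ⨆ t, f t)).trans_lt (Order.lt_succ _)).ne'
  have htW : ∀ t, g.trans s t → t ∈ ⋃ o'' : {x : Ordinal.{0} // x < o'}, g.W o''.1 := by
    intro t ht
    have hle : f ⟨t, ht⟩ ≤ ⨆ u, f u := le_ciSup (Ordinal.bddAbove_range f) _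
    exact Set.mem_iUnion.2 ⟨⟨f ⟨t, ht⟩, hle.trans_lt (Order.lt_succ _)⟩, hf ⟨t, ht⟩⟩
  by_cases hsW : s ∈ ⋃ o'' : {x : Ordinal.{0} // x < o'}, g.W o''.1
  · obtain ⟨⟨o'', _⟩, h''⟩ := Set.mem_iUnion.1 hsW
    exact winE_of_W h''
  · apply winE_of_W (o := o')
    rw [RGame.W, if_neg h0]
    exact ⟨hsW, Or.inr ⟨hs, hex, htW⟩⟩

lemma adam_losing {V : Type} {g : RGame V} {s : V} (hs : s ∉ g.eve) (hsW : s ∉ g.WinE)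
    (hex : ∃ t, g.trans s t) : ∃ t, g.trans s t ∧ t ∉ g.WinE := by
  by_contra h
  push_neg at h
  exact hsW (adam_step hs hex fun t ht => h t ht)

/-- the relation consisting of the identity, the pairs
`(s, s')` for `s ∉ WinE`, and the pairs `(⟨s,X⟩, ⟨s,s̄⟩)` for Adam's
`s ∉ WinE` with `s → s̄` and `s̄ ∉ WinE`, is a bisimulation on `L(G)`;
hence `s ∉ WinE` implies `s ∼ s'`. -/
theorem losing_bisimilar {V : Type} (g : RGame V) :
    (DLTS g).IsBisimulation (fun p q =>
      p = q ∨
      (∃ s : V, s ∉ g.WinE ∧ p = DState.base s ∧ q = DState.prime s) ∨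
      (∃ s t : V, s ∉ g.eve ∧ s ∉ g.WinE ∧ t ∉ g.WinE ∧ g.trans s t ∧
        p = DState.all s ∧ q = DState.pick s t)) ∧
    ∀ s : V, s ∉ g.WinE → (DLTS g).Bisim (DState.base s) (DState.prime s) := by
  have hlose : ∀ {s t : V}, s ∈ g.eve → s ∉ g.WinE → g.trans s t → t ∉ g.WinE :=
    fun hs hsW ht hW => hsW (eve_step hs ht hW)
  suffices hbis : (DLTS g).IsBisimulation (fun p q =>
      p = q ∨
      (∃ s : V, s ∉ g.WinE ∧ p = DState.base s ∧ q = DState.prime s) ∨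
      (∃ s t : V, s ∉ g.eve ∧ s ∉ g.WinE ∧ t ∉ g.WinE ∧ g.trans s t ∧
        p = DState.all s ∧ q = DState.pick s t)) by
    exact ⟨hbis, fun s hsW => ⟨_, hbis, Or.inr (Or.inl ⟨s, hsW, rfl, rfl⟩)⟩⟩
  intro p q hR
  rcases hR with rfl | ⟨s, hsW, rfl, rfl⟩ | ⟨s, t, hse, hsW, htW, hst, rfl, rfl⟩
  · exact ⟨fun a t h => ⟨t, h, Or.inl rfl⟩, fun a t h => ⟨t, h, Or.inl rfl⟩⟩
  · constructor
    · intro a t htr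
      cases htr with
      | eveBase hs h =>
          exact ⟨_, DTrans.evePrime hs h, Or.inr (Or.inl ⟨_, hlose hs hsW h, rfl, rfl⟩)⟩
      | choiceAll hs h =>
          obtain ⟨u, hu, huW⟩ := adam_losing hs hsW h
          exact ⟨_, DTrans.choicePickP hs hu,
            Or.inr (Or.inr ⟨s, u, hs, hsW, huW, hu, rfl, rfl⟩)⟩
      | choicePickB hs h =>
          exact ⟨_, DTrans.choicePickP hs h, Or.inl rfl⟩
      | winLoop h => exact absurd (target_winE h) hsW
    · intro a t' htr
      cases htr with
      | evePrime hs h =>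
          exact ⟨_, DTrans.eveBase hs h, Or.inr (Or.inl ⟨_, hlose hs hsW h, rfl, rfl⟩)⟩
      | choicePickP hs h =>
          exact ⟨_, DTrans.choicePickB hs h, Or.inl rfl⟩
  · constructor
    · intro a w htr
      cases htr with
      | allMove hs h =>
          rename_i u
          by_cases hut : u = t
          · subst hut
            exact ⟨_, DTrans.pickSame hse hst, Or.inr (Or.inl ⟨_, htW, rfl, rfl⟩)⟩
          · exact ⟨_, DTrans.pickOther hse hst h hut, Or.inl rfl⟩
    · intro a w htr
      cases htr with
      | pickSame hs h =>
          exact ⟨_, DTrans.allMove hse hst, Or.inr (Or.inl ⟨_, htW, rfl, rfl⟩)⟩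
      | pickOther hs ht hu hne =>
          exact ⟨_, DTrans.allMove hse hu, Or.inl rfl⟩
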